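/- Let A = K[u_0,...,u_d] be a polynomial ring over a field K of characteristic zero, and let F(t) = u_0 + u_1 t + ... + u_d t^d ∈ A[t]. For 0 ≤ i ≤ l < d, set z_i = F^{(i)}(t)/i!. Then the sequence z_l, z_{l-1}, ..., z_0 is a regular sequence in A[t]. -/

import Mathlib

open Polynomial MvPolynomial RingTheory.Sequence

namespace Stmt1Aux

variable {A : Type*} [CommRing A] {n : ℕ}

/-- binomial core: `(s + (-s))^N` -/
lemma core {B : Type*} [CommRing B] (s : B) (N : ℕ) :
    ∑ a ∈ Finset.range (N + 1), s ^ a * (-s) ^ (N - a) * (N.choose a : B) =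
      if N = 0 then 1 else 0 := by
  rw [← add_pow]
  simp [zero_pow_eq]

/-- inverse-Pascal delta identity -/
lemma delta {B : Type*} [CommRing B] (s : B) (i m : ℕ) :
    ∑ j ∈ Finset.range (m + 1),
      (j.choose i : B) * s ^ (j - i) * ((m.choose j : B) * (-s) ^ (m - j)) =
      if i = m then 1 else 0 := by
  by_cases him : i ≤ m
  · have hsub : Finset.Ico i (m+1) ⊆ Finset.range (m+1) := by
      intro j hj; simp only [Finset.mem_Ico] at hj; simp only [Finset.mem_range]; omega
    rw [← Finset.sum_subset hsub
      (by
        intro j hj hj2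
        have hji : j < i := by
          simp only [Finset.mem_range] at hj
          simp only [Finset.mem_Ico, not_and, not_lt] at hj2
          omega
        rw [Nat.choose_eq_zero_of_lt hji]
        simp)]
    rw [Finset.sum_Ico_eq_sum_range]
    have hmi : m + 1 - i = (m - i) + 1 := by omega
    rw [hmi]
    have hstep : ∀ a ∈ Finset.range ((m - i) + 1),
        ((i + a).choose i : B) * s ^ (i + a - i) * ((m.choose (i + a) : B) * (-s) ^ (m - (i + a)))
        = (m.choose i : B) * (s ^ a * (-s) ^ ((m - i) - a) * ((m - i).choose a : B)) := by
      intro a ha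
      simp only [Finset.mem_range] at ha
      have h1 : i + a ≤ m := by omega
      have h2 : i ≤ i + a := by omega
      have key : m.choose (i + a) * (i + a).choose i = m.choose i * (m - i).choose a := by
        have := Nat.choose_mul (n := m) h2
        simpa using this
      have key' : ((m.choose (i + a) : B)) * ((i + a).choose i : B)
          = (m.choose i : B) * ((m - i).choose a : B) := by
        exact_mod_cast congrArg (Nat.cast : ℕ → B) key
      have e1 : i + a - i = a := by omega
      have e2 : m - (i + a) = (m - i) - a := by omega
      rw [e1, e2]
      calc ((i + a).choose i : B) * s ^ a * ((m.choose (i + a) : B) * (-s) ^ ((m - i) - a))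
          = ((m.choose (i + a) : B) * ((i + a).choose i : B)) * (s ^ a * (-s) ^ ((m - i) - a)) := by ring
        _ = ((m.choose i : B) * ((m - i).choose a : B)) * (s ^ a * (-s) ^ ((m - i) - a)) := by rw [key']
        _ = (m.choose i : B) * (s ^ a * (-s) ^ ((m - i) - a) * ((m - i).choose a : B)) := by ring
    rw [Finset.sum_congr rfl hstep, ← Finset.mul_sum, core]
    by_cases him2 : i = m
    · subst him2; simp
    · have : m - i ≠ 0 := by omega
      simp [this, him2]
  · have : ∀ j ∈ Finset.range (m + 1), (j.choose i : B) * s ^ (j - i) *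
        ((m.choose j : B) * (-s) ^ (m - j)) = 0 := by
      intro j hj
      simp only [Finset.mem_range] at hj
      rw [Nat.choose_eq_zero_of_lt (by omega)]
      simp
    rw [Finset.sum_eq_zero this, if_neg (by omega)]


/-- `C (X j)` as an element of `A[u][t]`. -/
noncomputable def CXf (j : Fin n) : Polynomial (MvPolynomial (Fin n) A) :=
  Polynomial.C (MvPolynomial.X j)

/-- the image of the variable `u_i` under the Taylor-shift-by-`s` substitution. -/
noncomputable def wfun (s : Polynomial (MvPolynomial (Fin n) A)) (i : Fin n) :
    Polynomial (MvPolynomial (Fin n) A) :=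
  ∑ j : Fin n, (Nat.choose j i : Polynomial (MvPolynomial (Fin n) A)) * s ^ ((j : ℕ) - (i : ℕ)) * CXf j

/-- Taylor shift endomorphism of `A[u][t]`. -/
noncomputable def Phi (s : Polynomial (MvPolynomial (Fin n) A)) :
    Polynomial (MvPolynomial (Fin n) A) →+* Polynomial (MvPolynomial (Fin n) A) :=
  Polynomial.eval₂RingHom
    ((MvPolynomial.aeval (wfun s) :
        MvPolynomial (Fin n) A →ₐ[A] Polynomial (MvPolynomial (Fin n) A)) : _ →+* _)
    Polynomial.X

@[simp] lemma Phi_X (s : Polynomial (MvPolynomial (Fin n) A)) : Phi s Polynomial.X = Polynomial.X := by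
  simp [Phi]

@[simp] lemma Phi_CC (s : Polynomial (MvPolynomial (Fin n) A)) (a : A) :
    Phi s (Polynomial.C (MvPolynomial.C a)) = Polynomial.C (MvPolynomial.C a) := by
  simp [Phi, MvPolynomial.aeval_C, Polynomial.algebraMap_apply, MvPolynomial.algebraMap_eq]

@[simp] lemma Phi_CX (s : Polynomial (MvPolynomial (Fin n) A)) (j : Fin n) :
    Phi s (CXf j) = wfun s j := by
  simp [Phi, CXf]

/-- key inversion computation -/
lemma key (s : Polynomial (MvPolynomial (Fin n) A)) (i : Fin n) :
    ∑ j : Fin n, (Nat.choose j i : Polynomial (MvPolynomial (Fin n) A)) * s ^ ((j : ℕ) - (i : ℕ))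
        * wfun (-s) j = CXf i := by
  unfold wfun
  have hexp : ∀ j : Fin n,
      (Nat.choose j i : Polynomial (MvPolynomial (Fin n) A)) * s ^ ((j : ℕ) - (i : ℕ)) *
        (∑ m : Fin n, (Nat.choose m j : Polynomial (MvPolynomial (Fin n) A)) * (-s) ^ ((m : ℕ) - (j : ℕ)) * CXf m)
      = ∑ m : Fin n, ((Nat.choose j i : Polynomial (MvPolynomial (Fin n) A)) * s ^ ((j : ℕ) - (i : ℕ)) *
          ((Nat.choose m j : Polynomial (MvPolynomial (Fin n) A)) * (-s) ^ ((m : ℕ) - (j : ℕ)))) * CXf m := by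
    intro j
    rw [Finset.mul_sum]
    exact Finset.sum_congr rfl (fun m _ => by ring)
  rw [Finset.sum_congr rfl (fun j _ => hexp j), Finset.sum_comm]
  have hinner : ∀ m : Fin n,
      ∑ j : Fin n, (Nat.choose j i : Polynomial (MvPolynomial (Fin n) A)) * s ^ ((j : ℕ) - (i : ℕ)) *
          ((Nat.choose m j : Polynomial (MvPolynomial (Fin n) A)) * (-s) ^ ((m : ℕ) - (j : ℕ)))
        = if (i : ℕ) = (m : ℕ) then 1 else 0 := by
    intro m
    rw [Fin.sum_univ_eq_sum_range (fun j =>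
      (Nat.choose j i : Polynomial (MvPolynomial (Fin n) A)) * s ^ (j - (i : ℕ)) *
          ((Nat.choose m j : Polynomial (MvPolynomial (Fin n) A)) * (-s) ^ ((m : ℕ) - j)))]
    rw [← Finset.sum_subset (Finset.range_subset_range.mpr (show (m : ℕ) + 1 ≤ n from m.isLt))
      (by
        intro j hj hj2
        simp only [Finset.mem_range, not_lt] at hj hj2
        rw [Nat.choose_eq_zero_of_lt (show (m : ℕ) < j by omega)]
        simp)]
    exact delta s i m
  rw [Finset.sum_congr rfl (fun m _ => by rw [← Finset.sum_mul, hinner m])]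
  rw [Finset.sum_eq_single i (fun m _ hmi => by
      rw [if_neg (fun h => hmi (Fin.ext h.symm)), zero_mul])
    (fun h => absurd (Finset.mem_univ i) h)]
  simp

lemma Phi_wfun (s t : Polynomial (MvPolynomial (Fin n) A)) (hts : Phi t s = s) (j : Fin n) :
    Phi t (wfun s j) =
      ∑ m : Fin n, (Nat.choose m j : Polynomial (MvPolynomial (Fin n) A)) * s ^ ((m : ℕ) - (j : ℕ))
        * wfun t m := by
  unfold wfun
  rw [map_sum]
  refine Finset.sum_congr rfl (fun m _ => ?_)
  rw [map_mul, map_mul, map_pow, map_natCast, hts, Phi_CX]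
  rfl

/-- the two Taylor shifts are mutually inverse -/
lemma Phi_comp₁ :
    (Phi (n := n) (A := A) (-Polynomial.X)).comp (Phi Polynomial.X) = RingHom.id _ := by
  apply Polynomial.ringHom_ext
  · intro a
    refine RingHom.congr_fun (f := (((Phi (n := n) (A := A) (-Polynomial.X)).comp (Phi Polynomial.X)).comp Polynomial.C))
      (g := ((RingHom.id _).comp (Polynomial.C : MvPolynomial (Fin n) A →+* _))) ?_ a
    apply MvPolynomial.ringHom_ext
    · intro b; simp
    · intro j
      simp only [RingHom.comp_apply, RingHom.id_apply]
      show Phi (-Polynomial.X) (Phi Polynomial.X (CXf j)) = CXf j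
      rw [Phi_CX, Phi_wfun Polynomial.X (-Polynomial.X) (by simp), key]
  · simp

lemma Phi_comp₂ :
    (Phi (n := n) (A := A) Polynomial.X).comp (Phi (-Polynomial.X)) = RingHom.id _ := by
  apply Polynomial.ringHom_ext
  · intro a
    refine RingHom.congr_fun (f := (((Phi (n := n) (A := A) Polynomial.X).comp (Phi (-Polynomial.X))).comp Polynomial.C))
      (g := ((RingHom.id _).comp (Polynomial.C : MvPolynomial (Fin n) A →+* _))) ?_ a
    apply MvPolynomial.ringHom_ext
    · intro b; simp
    · intro j
      simp only [RingHom.comp_apply, RingHom.id_apply]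
      show Phi Polynomial.X (Phi (-Polynomial.X) (CXf j)) = CXf j
      rw [Phi_CX, Phi_wfun (-Polynomial.X) Polynomial.X (by simp)]
      have := key (n := n) (A := A) (-Polynomial.X) j
      rw [neg_neg] at this
      exact this
  · simp

/-- Taylor shift as a ring automorphism -/
noncomputable def PhiEquiv :
    Polynomial (MvPolynomial (Fin n) A) ≃+* Polynomial (MvPolynomial (Fin n) A) :=
  RingEquiv.ofRingHom (Phi Polynomial.X) (Phi (-Polynomial.X))
    (by convert Phi_comp₂ (n := n) (A := A))
    (by convert Phi_comp₁ (n := n) (A := A))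

@[simp] lemma PhiEquiv_apply (f : Polynomial (MvPolynomial (Fin n) A)) :
    PhiEquiv (n := n) (A := A) f = Phi Polynomial.X f := rfl


/-! ### killing variables -/

/-- the substitution sending `u_j ↦ 0` for `j ∈ ks` and fixing everything else -/
noncomputable def kappa (ks : List (Fin n)) : MvPolynomial (Fin n) A →+* MvPolynomial (Fin n) A :=
  ((MvPolynomial.aeval (fun j => if j ∈ ks then 0 else MvPolynomial.X j) :
      MvPolynomial (Fin n) A →ₐ[A] MvPolynomial (Fin n) A) : _ →+* _)

noncomputable def eps (ks : List (Fin n)) :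
    Polynomial (MvPolynomial (Fin n) A) →+* Polynomial (MvPolynomial (Fin n) A) :=
  Polynomial.mapRingHom (kappa ks)

@[simp] lemma kappa_X_mem {ks : List (Fin n)} {j : Fin n} (hj : j ∈ ks) :
    kappa (A := A) ks (MvPolynomial.X j) = 0 := by simp [kappa, hj]

@[simp] lemma kappa_X_not_mem {ks : List (Fin n)} {j : Fin n} (hj : j ∉ ks) :
    kappa (A := A) ks (MvPolynomial.X j) = MvPolynomial.X j := by simp [kappa, hj]

@[simp] lemma eps_CX_not_mem {ks : List (Fin n)} {j : Fin n} (hj : j ∉ ks) :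
    eps (A := A) ks (CXf j) = CXf j := by
  simp [eps, CXf, kappa_X_not_mem hj]

lemma sub_kappa_mem (ks : List (Fin n)) (r : MvPolynomial (Fin n) A) :
    r - kappa ks r ∈ Ideal.ofList (ks.map MvPolynomial.X) := by
  induction r using MvPolynomial.induction_on with
  | C a => simp [kappa, MvPolynomial.aeval_C, MvPolynomial.algebraMap_eq]
  | add p q hp hq =>
    have : p + q - kappa ks (p + q) = (p - kappa ks p) + (q - kappa ks q) := by
      rw [map_add]; ring
    rw [this]; exact add_mem hp hq
  | mul_X p j hp =>
    by_cases hj : j ∈ ks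
    · have : p * MvPolynomial.X j - kappa ks (p * MvPolynomial.X j) = p * MvPolynomial.X j := by
        rw [map_mul, kappa_X_mem hj, mul_zero, sub_zero]
      rw [this]
      exact Ideal.mul_mem_left _ _ (Ideal.subset_span (List.mem_map_of_mem (f := MvPolynomial.X) hj))
    · have : p * MvPolynomial.X j - kappa ks (p * MvPolynomial.X j)
          = (p - kappa ks p) * MvPolynomial.X j := by
        rw [map_mul, kappa_X_not_mem hj]; ring
      rw [this]
      exact Ideal.mul_mem_right _ _ hp

lemma ofList_CX_eq_map (ks : List (Fin n)) :
    Ideal.ofList (ks.map (CXf (A := A))) =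
      Ideal.map (Polynomial.C : MvPolynomial (Fin n) A →+* _)
        (Ideal.ofList (ks.map MvPolynomial.X)) := by
  rw [Ideal.map_ofList, List.map_map]
  rfl

lemma sub_eps_mem (ks : List (Fin n)) (f : Polynomial (MvPolynomial (Fin n) A)) :
    f - eps ks f ∈ Ideal.ofList (ks.map (CXf (A := A))) := by
  rw [ofList_CX_eq_map, Ideal.mem_map_C_iff]
  intro k
  rw [Polynomial.coeff_sub, eps, Polynomial.coe_mapRingHom, Polynomial.coeff_map]
  exact sub_kappa_mem ks _

lemma ofList_le_ker (ks : List (Fin n)) :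
    Ideal.ofList (ks.map (CXf (A := A))) ≤ RingHom.ker (eps (A := A) ks) := by
  rw [Ideal.span_le]
  rintro x hx
  simp only [Set.mem_setOf_eq, List.mem_map] at hx
  obtain ⟨j, hj, rfl⟩ := hx
  simp only [SetLike.mem_coe, RingHom.mem_ker, eps, Polynomial.coe_mapRingHom, CXf,
    Polynomial.map_C, kappa_X_mem hj, Polynomial.C_0]

lemma mem_ofList_iff_eps (ks : List (Fin n)) (f : Polynomial (MvPolynomial (Fin n) A)) :
    f ∈ Ideal.ofList (ks.map (CXf (A := A))) ↔ eps ks f = 0 := by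
  constructor
  · intro h; exact ofList_le_ker ks h
  · intro h
    have := sub_eps_mem ks f
    rwa [h, sub_zero] at this

lemma ideal_smul_top {B : Type*} [CommRing B] (I : Ideal B) :
    (I • ⊤ : Submodule B B) = I := by
  rw [smul_eq_mul, Ideal.mul_top]

lemma isSMulRegular_CX [IsDomain A] (ks : List (Fin n)) {j : Fin n} (hj : j ∉ ks) :
    IsSMulRegular
      (Polynomial (MvPolynomial (Fin n) A) ⧸
        (Ideal.ofList (ks.map (CXf (A := A))) • ⊤ :
          Submodule (Polynomial (MvPolynomial (Fin n) A)) (Polynomial (MvPolynomial (Fin n) A))))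
      (CXf (A := A) j) := by
  intro x y h
  obtain ⟨f, rfl⟩ := Submodule.Quotient.mk_surjective _ x
  obtain ⟨g, rfl⟩ := Submodule.Quotient.mk_surjective _ y
  simp only [] at h
  rw [← Submodule.Quotient.mk_smul, ← Submodule.Quotient.mk_smul, Submodule.Quotient.eq,
    ideal_smul_top] at h
  rw [Submodule.Quotient.eq, ideal_smul_top]
  have h2 : CXf j * (f - g) ∈ Ideal.ofList (ks.map (CXf (A := A))) := by
    have : CXf (A := A) j * (f - g) = CXf (A := A) j • f - CXf (A := A) j • g := by
      simp only [smul_eq_mul]; ring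
    rwa [this]
  rw [mem_ofList_iff_eps] at h2 ⊢
  rw [map_mul, eps_CX_not_mem hj] at h2
  have hCX : (CXf j : Polynomial (MvPolynomial (Fin n) A)) ≠ 0 := by
    simp [CXf, Polynomial.C_eq_zero, MvPolynomial.X_ne_zero]
  exact (mul_eq_zero.mp h2).resolve_left hCX

open RingTheory.Sequence in
lemma weakly [IsDomain A] (js : List (Fin n)) :
    ∀ ks : List (Fin n), (js ++ ks).Nodup →
    IsWeaklyRegular
      (Polynomial (MvPolynomial (Fin n) A) ⧸
        (Ideal.ofList (ks.map (CXf (A := A))) • ⊤ :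
          Submodule (Polynomial (MvPolynomial (Fin n) A)) (Polynomial (MvPolynomial (Fin n) A))))
      (js.map (CXf (A := A))) := by
  induction js with
  | nil => intro ks _; simp only [List.map_nil]; exact IsWeaklyRegular.nil (R := Polynomial (MvPolynomial (Fin n) A)) _
  | cons j js ih =>
    intro ks hnd
    rw [List.map_cons, isWeaklyRegular_cons_iff]
    have hj : j ∉ js ++ ks := (List.nodup_cons.mp hnd).1
    constructor
    · exact isSMulRegular_CX ks (fun h => hj (List.mem_append_right _ h))
    · have hperm : (j :: (js ++ ks)).Nodup := hnd
      have hnd2 : (js ++ j :: ks).Nodup := List.perm_middle.symm.nodup hperm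
      have := ih (j :: ks) hnd2
      have heq : ((j :: ks).map (CXf (A := A))) = CXf j :: ks.map (CXf (A := A)) := rfl
      rw [heq] at this
      exact ((Submodule.quotOfListConsSMulTopEquivQuotSMulTopOuter _ (CXf (A := A) j)
        (ks.map (CXf (A := A)))).isWeaklyRegular_congr (js.map (CXf (A := A)))).mp this

end Stmt1Aux

set_option maxHeartbeats 2000000 in
open Fin.NatCast in
open Stmt1Aux in
/-- For `F(t) = u_0 + u_1 t + ... + u_d t^d` over `A = K[u_0,...,u_d]`,
`K` a field of characteristic zero, and `z_i = F^{(i)}(t)/i!`, the sequence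
`z_l, z_{l-1}, ..., z_0` (for `l < d`) is a regular sequence in `A[t]`. -/
theorem stmt_1 (K : Type*) [Field K] [CharZero K] (d l : ℕ) (hl : l < d)
    (F : Polynomial (MvPolynomial (Fin (d + 1)) K))
    (hF : F = ∑ i : Fin (d + 1),
        Polynomial.C (MvPolynomial.X i) * Polynomial.X ^ (i : ℕ))
    (z : ℕ → Polynomial (MvPolynomial (Fin (d + 1)) K))
    (hz : ∀ i, z i = ((Nat.factorial i : K)⁻¹) • Polynomial.derivative^[i] F) :
    RingTheory.Sequence.IsRegular (Polynomial (MvPolynomial (Fin (d + 1)) K))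
      ((List.range (l + 1)).reverse.map z) := by
  classical
  -- iterated derivative computation
  have hD : ∀ (i : ℕ) (p : Polynomial (MvPolynomial (Fin (d + 1)) K)), Polynomial.derivative^[i] p
      = ((Polynomial.derivative : Polynomial (MvPolynomial (Fin (d + 1)) K) →ₗ[MvPolynomial (Fin (d + 1)) K] _) ^ i) p :=
    fun i p => (Module.End.pow_apply _ _ _).symm
  have hder : ∀ i : ℕ, Polynomial.derivative^[i] F
      = ∑ j : Fin (d + 1), Polynomial.C (MvPolynomial.X j) *
          (Nat.descFactorial (j : ℕ) i : Polynomial (MvPolynomial (Fin (d + 1)) K)) * Polynomial.X ^ ((j : ℕ) - i) := by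
    intro i
    rw [hF, hD, map_sum]
    refine Finset.sum_congr rfl fun j _ => ?_
    rw [← hD, Polynomial.iterate_derivative_C_mul,
      Polynomial.iterate_derivative_X_pow_eq_natCast_mul]
    ring
  have hfac : ∀ (i : ℕ) (y : Polynomial (MvPolynomial (Fin (d + 1)) K)),
      ((Nat.factorial i : K)⁻¹) • ((Nat.factorial i : Polynomial (MvPolynomial (Fin (d + 1)) K)) * y) = y := by
    intro i y
    rw [← map_natCast (algebraMap K (Polynomial (MvPolynomial (Fin (d + 1)) K))) (Nat.factorial i), ← Algebra.smul_def, smul_smul,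
      inv_mul_cancel₀ (by exact_mod_cast i.factorial_ne_zero), one_smul]
  have hzw : ∀ i : ℕ, i ≤ l → z i = wfun Polynomial.X ((i : Fin (d + 1))) := by
    intro i hi
    have hival : ((i : Fin (d + 1)) : ℕ) = i := Fin.val_cast_of_lt (by omega)
    rw [hz i, hder i, Finset.smul_sum]
    unfold Stmt1Aux.wfun Stmt1Aux.CXf
    rw [hival]
    refine Finset.sum_congr rfl fun j _ => ?_
    rw [Nat.descFactorial_eq_factorial_mul_choose, Nat.cast_mul]
    have : Polynomial.C (MvPolynomial.X j) *
          ((Nat.factorial i : Polynomial (MvPolynomial (Fin (d + 1)) K)) * ((Nat.choose (j : ℕ) i : ℕ) : Polynomial (MvPolynomial (Fin (d + 1)) K))) * Polynomial.X ^ ((j : ℕ) - i)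
        = (Nat.factorial i : Polynomial (MvPolynomial (Fin (d + 1)) K)) * (((Nat.choose (j : ℕ) i : ℕ) : Polynomial (MvPolynomial (Fin (d + 1)) K)) * Polynomial.X ^ ((j : ℕ) - i)
            * Polynomial.C (MvPolynomial.X j)) := by ring
    rw [this, hfac]
  -- the index list
  set js : List (Fin (d + 1)) :=
    (List.range (l + 1)).reverse.map (fun i : ℕ => (i : Fin (d + 1))) with hjs
  have hmem : ∀ i ∈ (List.range (l + 1)).reverse, i ≤ l := by
    intro i hi
    rw [List.mem_reverse, List.mem_range] at hi
    omega
  have hlist : (List.range (l + 1)).reverse.map z = js.map (wfun Polynomial.X) := by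
    rw [hjs, List.map_map]
    refine List.map_congr_left fun i hi => hzw i (hmem i hi)
  rw [hlist]
  -- nodup
  have hnd : js.Nodup := by
    refine List.Nodup.map_on ?_ (List.nodup_reverse.mpr (List.nodup_range))
    intro x hx y hy hxy
    have hx' := hmem x hx
    have hy' := hmem y hy
    have : ((x : Fin (d + 1)) : ℕ) = ((y : Fin (d + 1)) : ℕ) := by rw [hxy]
    rwa [Fin.val_cast_of_lt (by omega), Fin.val_cast_of_lt (by omega)] at this
  -- regularity for the plain variables
  have hreg : RingTheory.Sequence.IsRegular (Polynomial (MvPolynomial (Fin (d + 1)) K)) (js.map (CXf (A := K))) := by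
    refine ⟨?_, ?_⟩
    · have hw := Stmt1Aux.weakly (A := K) js [] (by simpa using hnd)
      have hbot : (Ideal.ofList (([] : List (Fin (d + 1))).map (CXf (A := K))) • ⊤ :
          Submodule (Polynomial (MvPolynomial (Fin (d + 1)) K)) (Polynomial (MvPolynomial (Fin (d + 1)) K))) = ⊥ := by simp
      exact ((Submodule.quotEquivOfEqBot _ hbot).isWeaklyRegular_congr
        (js.map (CXf (A := K)))).mp hw
    · rw [Stmt1Aux.ideal_smul_top]
      intro h
      have h1 : (1 : Polynomial (MvPolynomial (Fin (d + 1)) K)) ∈ Ideal.ofList (js.map (CXf (A := K))) := h ▸ Submodule.mem_top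
      rw [Stmt1Aux.mem_ofList_iff_eps] at h1
      rw [map_one] at h1
      exact one_ne_zero h1
  -- transfer along the Taylor-shift automorphism
  have hforall : List.Forall₂ (fun r s : Polynomial (MvPolynomial (Fin (d + 1)) K) => ∀ x : Polynomial (MvPolynomial (Fin (d + 1)) K),
        (PhiEquiv (A := K) (n := d + 1)).toAddEquiv (r • x) =
          s • (PhiEquiv (A := K) (n := d + 1)).toAddEquiv x)
      (js.map (CXf (A := K))) (js.map (wfun Polynomial.X)) := by
    rw [List.forall₂_map_left_iff, List.forall₂_map_right_iff]
    rw [List.forall₂_same]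
    intro j _ x
    show Phi Polynomial.X (CXf j * x) = wfun Polynomial.X j * Phi Polynomial.X x
    rw [map_mul, Phi_CX]
  exact (AddEquiv.isRegular_congr hforall).mp hreg
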